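/- Let (D,q) be a good pair with deg D = 3, let N := #{(x,y) ∈ F_q × F_q : y² = D(x)}, and suppose a := q − N is nonzero. Then for every t ∈ ℝ: every complex zero of x ↦ Ξ_t(x, χ_D) is real if and only if t ≥ log(|a| / (2√q)). In particular, the De Bruijn–Newman constant of D equals log(|a| / (2√q)). -/
import Mathlib


open Polynomial

noncomputable section

variable {F : Type} [Field F] [Fintype F]

/-- Kronecker symbol of `D` at a monic irreducible `g`:
`0` if `g ∣ D`, `1` if `D` is a nonzero square mod `g`, `-1` otherwise. -/
def kron (D g : F[X]) : ℤ := by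
  classical exact
    if g ∣ D then 0 else if ∃ h : F[X], g ∣ (h ^ 2 - D) then 1 else -1

/-- `χ_D(f)`: the Kronecker symbol extended multiplicatively over the monic
irreducible factors of `f`, counted with multiplicity; `χ_D(1) = 1`.
(Each irreducible factor is rescaled to be monic.) -/
def chi (D f : F[X]) : ℤ :=
  ((UniqueFactorizationMonoid.factors f).map
    (fun g => kron D (C (g.leadingCoeff)⁻¹ * g))).prod

/-- `c_n(D) = Σ_{f monic, deg f = n} χ_D(f)`; monic polynomials of degree `n`
are parametrized by their lower-order coefficients. -/
def lCoeff (D : F[X]) (n : ℕ) : ℤ :=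
  ∑ v : Fin n → F, chi D (X ^ n + ∑ i : Fin n, C (v i) * X ^ (i : ℕ))

/-- The deformed `L`-function `Ξ_t(x, χ_D)`, with `g = (deg D - 1)/2`. -/
def Xi (D : F[X]) (t : ℝ) (x : ℂ) : ℂ :=
  (lCoeff D ((D.natDegree - 1) / 2) : ℂ) +
    ∑ n ∈ Finset.Icc 1 ((D.natDegree - 1) / 2),
      (lCoeff D ((D.natDegree - 1) / 2 - n) : ℂ) *
        ((Real.sqrt (Fintype.card F) ^ n * Real.exp (t * n ^ 2) : ℝ) : ℂ) *
        (Complex.exp (n * Complex.I * x) + Complex.exp (-(n * Complex.I * x)))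

/-- `(D, q)` is a good pair: `q` odd, `D` monic, squarefree, of odd degree `≥ 3`. -/
def GoodPair (D : F[X]) : Prop :=
  Odd (Fintype.card F) ∧ D.Monic ∧ Squarefree D ∧ Odd D.natDegree ∧ 3 ≤ D.natDegree

end

noncomputable section AuxLemmas

open Polynomial

variable {F : Type} [Field F] [Fintype F]

set_option linter.unusedSectionVars false

/-- Auxiliary: the value of the quadratic character of `F` on `s`, as an integer. -/
def kv (s : F) : ℤ := by
  classical exact if s = 0 then 0 else if IsSquare s then 1 else -1

lemma chi_one' (D : F[X]) : chi D 1 = 1 := by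
  simp [chi, UniqueFactorizationMonoid.factors_one]

lemma chi_irred' (D f : F[X]) (hf : Irreducible f) (hm : f.Monic) : chi D f = kron D f := by
  obtain ⟨p, hfp, hfac⟩ := prime_factors_irreducible hf
    ⟨fun b hb => UniqueFactorizationMonoid.prime_of_factor b hb,
     UniqueFactorizationMonoid.factors_prod hf.ne_zero⟩
  rw [chi, hfac, Multiset.map_singleton, Multiset.prod_singleton]
  obtain ⟨u, hu⟩ := hfp
  obtain ⟨r, hr, hCr⟩ := Polynomial.isUnit_iff.mp u.isUnit
  have hp : p = f * C r := by rw [hCr, hu]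
  have hr0 : r ≠ 0 := hr.ne_zero
  have hl : p.leadingCoeff = r := by
    rw [hp, leadingCoeff_mul, hm.leadingCoeff, one_mul, leadingCoeff_C]
  rw [hl, hp]
  congr 1
  rw [← mul_assoc, mul_comm (C r⁻¹) f, mul_assoc, ← C_mul, inv_mul_cancel₀ hr0, C_1, mul_one]

lemma kron_linear' (D : F[X]) (x0 : F) : kron D (X - C x0) = kv (D.eval x0) := by
  classical
  have h1 : ((X - C x0) ∣ D) ↔ (D.eval x0 = 0) := dvd_iff_isRoot
  have h2 : (∃ h : F[X], (X - C x0) ∣ (h ^ 2 - D)) ↔ IsSquare (D.eval x0) := by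
    constructor
    · rintro ⟨h, hh⟩
      rw [dvd_iff_isRoot] at hh
      have he : (h ^ 2 - D).eval x0 = 0 := hh
      simp only [eval_sub, eval_pow, sub_eq_zero] at he
      exact ⟨h.eval x0, by rw [← he]; ring⟩
    · rintro ⟨y, hy⟩
      refine ⟨C y, ?_⟩
      rw [dvd_iff_isRoot]
      show ((C y) ^ 2 - D).eval x0 = 0
      simp [hy]
      ring
  simp only [kron, kv, h1, h2]

lemma lCoeff_zero' (D : F[X]) : lCoeff D 0 = 1 := by
  rw [lCoeff]
  simp [chi_one' D]

lemma lCoeff_one' (D : F[X]) : lCoeff D 1 = ∑ x : F, kv (D.eval x) := by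
  rw [lCoeff]
  have step1 : ∀ v : Fin 1 → F,
      chi D (X ^ 1 + ∑ i : Fin 1, C (v i) * X ^ (i : ℕ)) = kv (D.eval (-(v 0))) := by
    intro v
    have hpoly : (X ^ 1 + ∑ i : Fin 1, C (v i) * X ^ (i : ℕ)) = X - C (-(v 0)) := by
      simp [Fin.sum_univ_one, map_neg, sub_neg_eq_add]
    rw [hpoly, chi_irred' D _ (irreducible_X_sub_C _) (monic_X_sub_C _), kron_linear']
  rw [Finset.sum_congr rfl fun v _ => step1 v]
  exact (Fintype.sum_equiv (Equiv.funUnique (Fin 1) F) _ (fun c => kv (D.eval (-c)))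
    (fun v => rfl)).trans (Fintype.sum_equiv (Equiv.neg F) _ _ (fun c => by simp))

lemma card_sqrts' (hchar : ringChar F ≠ 2) (s : F) :
    (Nat.card {y : F // y ^ 2 = s} : ℤ) = 1 + kv s := by
  classical
  have hq := quadraticChar_card_sqrts hchar s
  have hcard : Nat.card {y : F // y ^ 2 = s} = {x : F | x ^ 2 = s}.toFinset.card := by
    rw [Set.toFinset_card, Nat.card_eq_fintype_card]
    exact Fintype.card_congr (Equiv.subtypeEquivRight (fun x => Iff.rfl))
  rw [hcard, hq]
  have h3 : quadraticChar F s = kv s := by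
    rw [quadraticChar_apply, quadraticCharFun, kv]
  rw [h3]; ring

lemma card_points' (hchar : ringChar F ≠ 2) (D : F[X]) :
    (Nat.card {pt : F × F // pt.2 ^ 2 = D.eval pt.1} : ℤ) = ∑ x : F, (1 + kv (D.eval x)) := by
  classical
  have e : {pt : F × F // pt.2 ^ 2 = D.eval pt.1} ≃ Σ x : F, {y : F // y ^ 2 = D.eval x} :=
    Equiv.subtypeProdEquivSigmaSubtype (fun x y => y ^ 2 = D.eval x)
  rw [Nat.card_congr e, Nat.card_eq_fintype_card, Fintype.card_sigma]
  push_cast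
  refine Finset.sum_congr rfl fun x _ => ?_
  rw [← card_sqrts' hchar (D.eval x), Nat.card_eq_fintype_card]

lemma two_cos_eq' (x : ℂ) :
    Complex.exp (Complex.I * x) + Complex.exp (-(Complex.I * x)) = 2 * Complex.cos x := by
  rw [Complex.cos, mul_comm Complex.I x, ← neg_mul]
  ring

lemma core' (A r : ℝ) (hr : 0 < r) :
    (∀ x : ℂ, (A : ℂ) + (r : ℂ) * (2 * Complex.cos x) = 0 → x.im = 0) ↔ |A| ≤ 2 * r := by
  have hrc : (r : ℂ) ≠ 0 := by exact_mod_cast hr.ne'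
  have h2r : (0 : ℝ) < 2 * r := by linarith
  constructor
  · intro h
    by_contra hlt
    push_neg at hlt
    obtain ⟨x, hx⟩ := Complex.cos_surjective (((-A / (2 * r) : ℝ)) : ℂ)
    have hzero : (A : ℂ) + (r : ℂ) * (2 * Complex.cos x) = 0 := by
      rw [hx]
      push_cast
      field_simp
      ring
    have him := h x hzero
    have hxre : x = (x.re : ℂ) := by
      apply Complex.ext <;> simp [him]
    rw [hxre, ← Complex.ofReal_cos] at hx
    have hrc2 : Real.cos x.re = -A / (2 * r) := by exact_mod_cast hx
    have hle := Real.abs_cos_le_one x.re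
    rw [hrc2, abs_div, abs_neg] at hle
    rw [abs_of_pos h2r, div_le_one h2r] at hle
    linarith
  · intro hle x hx
    have hcos : Complex.cos x = ((-A / (2 * r) : ℝ) : ℂ) := by
      have : Complex.cos x = -(A : ℂ) / (2 * (r : ℂ)) := by
        rw [eq_div_iff (mul_ne_zero two_ne_zero hrc)]
        linear_combination hx
      rw [this]
      push_cast
      ring
    by_contra him
    have hsinh : Real.sinh x.im ≠ 0 := Real.sinh_ne_zero.mpr him
    have hdecomp := Complex.cos_eq x
    rw [hcos, ← Complex.ofReal_cos, ← Complex.ofReal_cosh, ← Complex.ofReal_sin,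
      ← Complex.ofReal_sinh, ← Complex.ofReal_mul, ← Complex.ofReal_mul] at hdecomp
    have him0 : Real.sin x.re * Real.sinh x.im = 0 := by
      have h := congrArg Complex.im hdecomp
      simp only [Complex.ofReal_im, Complex.sub_im, Complex.mul_I_im, Complex.ofReal_re,
        zero_sub, neg_eq_zero] at h
      linarith
    have hre0 : Real.cos x.re * Real.cosh x.im = -A / (2 * r) := by
      have h := congrArg Complex.re hdecomp
      simp only [Complex.ofReal_re, Complex.sub_re, Complex.mul_I_re, Complex.ofReal_im,
        neg_zero, sub_zero] at h
      exact h.symm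
    have hsin : Real.sin x.re = 0 := by
      rcases mul_eq_zero.mp him0 with h | h
      · exact h
      · exact absurd h hsinh
    have hcos2 : Real.cos x.re ^ 2 = 1 := by
      have := Real.sin_sq_add_cos_sq x.re
      rw [hsin] at this; nlinarith
    have habs : |Real.cos x.re| = 1 := by
      rw [← Real.sqrt_sq_eq_abs, hcos2, Real.sqrt_one]
    have hcosh : 1 < Real.cosh x.im := Real.one_lt_cosh.mpr him
    have hub : |(-A / (2 * r) : ℝ)| ≤ 1 := by
      rw [abs_div, abs_neg, abs_of_pos h2r, div_le_one h2r]; exact hle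
    rw [← hre0, abs_mul, habs, one_mul, abs_of_pos (lt_trans one_pos hcosh)] at hub
    linarith

end AuxLemmas

/-- For a good pair `(D, q)` with `deg D = 3`,
`N = #{(x,y) ∈ F_q² : y² = D(x)}` and `a = q - N ≠ 0`: for every `t ∈ ℝ`, all
zeros of `Ξ_t(·, χ_D)` are real iff `t ≥ log(|a| / (2√q))`. In particular the
De Bruijn–Newman constant of `D` equals `log(|a| / (2√q))`. -/
theorem stmt18 (F : Type) [Field F] [Fintype F] (D : F[X]) (hD : GoodPair D)
    (hdeg : D.natDegree = 3) (a : ℤ)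
    (haN : a = (Fintype.card F : ℤ)
        - (Nat.card {pt : F × F // pt.2 ^ 2 = D.eval pt.1} : ℤ))
    (ha : a ≠ 0) (t : ℝ) :
    (∀ x : ℂ, Xi D t x = 0 → x.im = 0) ↔
      Real.log (|a| / (2 * Real.sqrt (Fintype.card F))) ≤ t := by
  classical
  have hchar : ringChar F ≠ 2 := by
    intro h
    have h2 := FiniteField.even_card_of_char_two h
    have h1 := hD.1
    rw [Nat.odd_iff] at h1
    omega
  -- identify `a` with `- lCoeff D 1`
  have hsum : (Nat.card {pt : F × F // pt.2 ^ 2 = D.eval pt.1} : ℤ)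
      = (Fintype.card F : ℤ) + lCoeff D 1 := by
    rw [card_points' hchar D, Finset.sum_add_distrib, Finset.sum_const, Finset.card_univ,
      lCoeff_one']
    simp
  have hac : a = -(lCoeff D 1) := by rw [haN, hsum]; ring
  -- simplify `Xi`
  set q : ℕ := Fintype.card F with hq
  have hq0 : (0 : ℝ) < (q : ℝ) := by
    have := Fintype.card_pos (α := F)
    exact_mod_cast this
  have hsq : (0 : ℝ) < Real.sqrt q := Real.sqrt_pos.mpr hq0
  set r : ℝ := Real.sqrt q * Real.exp t with hrdef
  have hr : 0 < r := mul_pos hsq (Real.exp_pos t)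
  have hXi : ∀ x : ℂ, Xi D t x
      = (((-a : ℤ) : ℝ) : ℂ) + (r : ℂ) * (2 * Complex.cos x) := by
    intro x
    have h1 : (D.natDegree - 1) / 2 = 1 := by rw [hdeg]
    rw [Xi, h1, Finset.Icc_self, Finset.sum_singleton]
    have h10 : (1 : ℕ) - 1 = 0 := rfl
    rw [h10, lCoeff_zero']
    have hc : lCoeff D 1 = -a := by rw [hac]; ring
    rw [hc]
    push_cast
    simp only [one_mul, pow_one, one_pow, mul_one]
    rw [two_cos_eq', hrdef]
    push_cast
    ring
  have habs : |((-a : ℤ) : ℝ)| = ((|a| : ℤ) : ℝ) := by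
    push_cast
    rw [abs_neg]
  rw [show (∀ x : ℂ, Xi D t x = 0 → x.im = 0)
      ↔ (∀ x : ℂ, (((-a : ℤ) : ℝ) : ℂ) + (r : ℂ) * (2 * Complex.cos x) = 0 → x.im = 0) from
    forall_congr' fun x => by rw [hXi x]]
  rw [core' _ r hr, habs]
  have hapos : (0 : ℝ) < ((|a| : ℤ) : ℝ) := by
    have : 0 < |a| := abs_pos.mpr ha
    exact_mod_cast this
  have h2sq : (0 : ℝ) < 2 * Real.sqrt q := by linarith
  rw [Real.log_le_iff_le_exp (div_pos hapos h2sq), div_le_iff₀ h2sq]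
  constructor <;> intro h <;> nlinarith [Real.exp_pos t]
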